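/- Let p > q be distinct primes, let m(p,q) be the smallest positive integer m such that q^{p−1} ≢ 1 (mod p^{m+1}), and suppose C ≥ 0 is an integer such that the multiplicative order of q^{p−1} in (ℤ/p^mℤ)^× equals p^{m−1−C} for all sufficiently large m. Then for every integer m_1 > m(p,q)/(q−1) and every integer k with 1 ≤ k ≤ p^{m_1(q−1)} and k ≡ 1 (mod p^{C+1}), there exist infinitely many pairs (m_2, j) of positive integers with 1 ≤ j ≤ q^{m_2(p−1)}, j ≡ −1 (mod q), and k·q^{m_2(p−1)} − j·p^{m_1(q−1)} = 1 (equivalently k/p^{m_1(q−1)} − j/q^{m_2(p−1)} = 1/(p^{m_1(q−1)} q^{m_2(p−1)})). -/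

import Mathlib

private lemma aux_mod_iff {a m : ℕ} (ha : 1 ≤ a) : a ≡ 1 [MOD m] ↔ m ∣ a - 1 := by
  constructor
  · intro h; exact (Nat.modEq_iff_dvd' ha).mp h.symm
  · intro h; exact ((Nat.modEq_iff_dvd' ha).mpr h).symm

/-- order of `q^(p-1)` in `ZMod (p^L)` via LTE -/
private lemma aux_order (p q mpq L : ℕ) (hp : p.Prime) (hodd : Odd p) (hpq : ¬ p ∣ q)
    (h1 : p ^ mpq ∣ q ^ (p - 1) - 1) (h2 : ¬ p ^ (mpq + 1) ∣ q ^ (p - 1) - 1)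
    (hmpq1 : 1 ≤ mpq) (hL : mpq ≤ L) :
    orderOf ((q : ZMod (p ^ L)) ^ (p - 1)) = p ^ (L - mpq) := by
  have hq0 : q ≠ 0 := by rintro rfl; exact hpq (dvd_zero p)
  set a := q ^ (p - 1) with ha_def
  have ha1 : 1 ≤ a := Nat.one_le_iff_ne_zero.mpr (pow_ne_zero _ hq0)
  have hx : ¬ p ∣ a := fun h => hpq (hp.dvd_of_dvd_pow h)
  have hxy : p ∣ a - 1 := dvd_trans (dvd_pow_self p (Nat.one_le_iff_ne_zero.mp hmpq1)) h1
  have hmult : emultiplicity p (a - 1) = (mpq : ℕ∞) := emultiplicity_eq_coe.mpr ⟨h1, h2⟩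
  have key : ∀ n : ℕ, 0 < n →
      (((q : ZMod (p ^ L)) ^ (p - 1)) ^ n = 1 ↔ p ^ (L - mpq) ∣ n) := by
    intro n hn
    have hfin : FiniteMultiplicity p n := Nat.finiteMultiplicity_iff.mpr ⟨hp.ne_one, hn⟩
    have hlte := Nat.emultiplicity_pow_sub_pow hp hodd hxy hx n
    rw [one_pow] at hlte
    have han : 1 ≤ a ^ n := Nat.one_le_iff_ne_zero.mpr (pow_ne_zero _ (by omega))
    have hcast : ((q : ZMod (p ^ L)) ^ (p - 1)) ^ n = 1 ↔ a ^ n ≡ 1 [MOD p ^ L] := by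
      rw [← Nat.cast_one (R := ZMod (p ^ L)), ← ZMod.natCast_eq_natCast_iff]
      simp only [ha_def]
      push_cast
      rfl
    rw [hcast, aux_mod_iff han, pow_dvd_iff_le_emultiplicity, hlte, hmult,
      hfin.emultiplicity_eq_multiplicity, hfin.pow_dvd_iff_le_multiplicity]
    constructor
    · intro h
      have := ENat.coe_le_coe.mp (by exact_mod_cast h : (L : ℕ∞) ≤ ((mpq + multiplicity p n : ℕ) : ℕ∞))
      omega
    · intro h
      exact_mod_cast ENat.coe_le_coe.mpr (by omega : L ≤ mpq + multiplicity p n)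
  have hpos : 0 < p ^ (L - mpq) := Nat.pow_pos hp.pos
  have hd1 : (((q : ZMod (p ^ L)) ^ (p - 1))) ^ (p ^ (L - mpq)) = 1 :=
    (key _ hpos).mpr dvd_rfl
  have hfo : IsOfFinOrder ((q : ZMod (p ^ L)) ^ (p - 1)) :=
    isOfFinOrder_iff_pow_eq_one.mpr ⟨_, hpos, hd1⟩
  exact Nat.dvd_antisymm (orderOf_dvd_of_pow_eq_one hd1)
    ((key _ hfo.orderOf_pos).mp (pow_orderOf_eq_one _))

private lemma aux_exists (p q mpq L : ℕ) (hp : p.Prime) (hodd : Odd p) (hpq : ¬ p ∣ q)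
    (h1 : p ^ mpq ∣ q ^ (p - 1) - 1) (h2 : ¬ p ^ (mpq + 1) ∣ q ^ (p - 1) - 1)
    (hmpq1 : 1 ≤ mpq) (hL : mpq ≤ L)
    (k : ℕ) (hk : k ≡ 1 [MOD p ^ mpq]) :
    ∃ t : ℕ, ∀ s : ℕ, k * (q ^ (p - 1)) ^ (t + s * p ^ (L - mpq)) ≡ 1 [MOD p ^ L] := by
  have hq0 : q ≠ 0 := by rintro rfl; exact hpq (dvd_zero p)
  haveI : NeZero (p ^ L) := ⟨pow_ne_zero _ hp.pos.ne'⟩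
  haveI : NeZero (p ^ mpq) := ⟨pow_ne_zero _ hp.pos.ne'⟩
  haveI : Fact p.Prime := ⟨hp⟩
  -- coprimality
  have hcq : Nat.Coprime (q ^ (p - 1)) (p ^ L) :=
    Nat.Coprime.pow _ _ ((hp.coprime_iff_not_dvd.mpr hpq).symm)
  have hpk : ¬ p ∣ k := by
    intro hdvd
    have : k ≡ 1 [MOD p] := hk.of_dvd (dvd_pow_self p (by omega))
    have h01 : (0 : ℕ) ≡ 1 [MOD p] := (Nat.modEq_zero_iff_dvd.mpr hdvd).symm.trans this
    have hdv1 : p ∣ 1 := by simpa using (Nat.modEq_iff_dvd' (by norm_num)).mp h01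
    exact absurd (Nat.dvd_one.mp hdv1) hp.one_lt.ne'
  have hck : Nat.Coprime k (p ^ L) :=
    Nat.Coprime.pow_right _ ((hp.coprime_iff_not_dvd.mpr hpk).symm)
  set g : (ZMod (p ^ L))ˣ := ZMod.unitOfCoprime _ hcq with hg_def
  set u : (ZMod (p ^ L))ˣ := ZMod.unitOfCoprime _ hck with hu_def
  have hgval : (g : ZMod (p ^ L)) = (q : ZMod (p ^ L)) ^ (p - 1) := by
    rw [hg_def, ZMod.coe_unitOfCoprime]; push_cast; rfl
  have hord : orderOf g = p ^ (L - mpq) := by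
    rw [← orderOf_units, hgval]
    exact aux_order p q mpq L hp hodd hpq h1 h2 hmpq1 hL
  -- the kernel subgroup
  have hdd : p ^ mpq ∣ p ^ L := pow_dvd_pow p hL
  set K : Subgroup (ZMod (p ^ L))ˣ := (ZMod.unitsMap hdd).ker with hK_def
  have hcardK : Nat.card K = p ^ (L - mpq) := by
    have hsurj : Function.Surjective (ZMod.unitsMap hdd) := ZMod.unitsMap_surjective hdd
    have hidx : K.index = Nat.card (ZMod (p ^ mpq))ˣ := by
      rw [hK_def, Subgroup.index_ker, MonoidHom.range_eq_top.mpr hsurj]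
      exact Nat.card_congr Subgroup.topEquiv.toEquiv
    have hmul := K.card_mul_index
    rw [hidx] at hmul
    have hc1 : Nat.card (ZMod (p ^ mpq))ˣ = p ^ (mpq - 1) * (p - 1) := by
      rw [Nat.card_eq_fintype_card, ZMod.card_units_eq_totient,
        Nat.totient_prime_pow hp (by omega)]
    have hc2 : Nat.card (ZMod (p ^ L))ˣ = p ^ (L - 1) * (p - 1) := by
      rw [Nat.card_eq_fintype_card, ZMod.card_units_eq_totient,
        Nat.totient_prime_pow hp (by omega)]
    rw [hc1, hc2] at hmul
    have hsplit : p ^ (L - 1) = p ^ (L - mpq) * p ^ (mpq - 1) := by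
      rw [← pow_add]; congr 1; omega
    have hpos : 0 < p ^ (mpq - 1) * (p - 1) :=
      Nat.mul_pos (Nat.pow_pos hp.pos) (by have := hp.two_le; omega)
    apply Nat.eq_of_mul_eq_mul_right hpos
    rw [hmul, hsplit]; ring
  -- membership in kernel
  have hmem : ∀ (n : ℕ) (hc : Nat.Coprime n (p ^ L)), n ≡ 1 [MOD p ^ mpq] →
      ZMod.unitOfCoprime n hc ∈ K := by
    intro n hc hmod
    rw [hK_def, MonoidHom.mem_ker]
    apply Units.ext
    show (ZMod.castHom hdd (ZMod (p ^ mpq))) (ZMod.unitOfCoprime n hc : ZMod (p ^ L)) = 1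
    rw [ZMod.coe_unitOfCoprime, map_natCast]
    rw [← Nat.cast_one (R := ZMod (p ^ mpq)), ZMod.natCast_eq_natCast_iff]
    exact hmod
  have hgK : g ∈ K := by
    apply hmem
    exact (aux_mod_iff (Nat.one_le_iff_ne_zero.mpr (pow_ne_zero _ hq0))).mpr h1
  have huK : u ∈ K := hmem _ _ hk
  -- zpowers g = K
  have hle : Subgroup.zpowers g ≤ K := Subgroup.zpowers_le.mpr hgK
  have hKeq : Subgroup.zpowers g = K := by
    apply Subgroup.eq_of_le_of_card_ge hle
    rw [hcardK, Nat.card_zpowers, hord]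
  have huinv : u⁻¹ ∈ Subgroup.zpowers g := hKeq ▸ K.inv_mem huK
  obtain ⟨t, ht⟩ := mem_powers_iff_mem_zpowers.mpr huinv
  refine ⟨t, fun s => ?_⟩
  have hunit : u * g ^ (t + s * p ^ (L - mpq)) = 1 := by
    rw [pow_add, mul_comm s, pow_mul, ← hord, pow_orderOf_eq_one, one_pow, mul_one]
    show u * (fun x => g ^ x) t = 1
    rw [ht, mul_inv_cancel]
  have hzval : ((k * (q ^ (p - 1)) ^ (t + s * p ^ (L - mpq)) : ℕ) : ZMod (p ^ L)) = 1 := by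
    push_cast
    calc ((k : ZMod (p ^ L)) * ((q : ZMod (p ^ L)) ^ (p - 1)) ^ (t + s * p ^ (L - mpq)))
        = ((u * g ^ (t + s * p ^ (L - mpq)) : (ZMod (p ^ L))ˣ) : ZMod (p ^ L)) := by
          rw [Units.val_mul, Units.val_pow_eq_pow_val, hgval, hu_def, ZMod.coe_unitOfCoprime]
      _ = 1 := by rw [hunit]; rfl
  rw [← Nat.cast_one (R := ZMod (p ^ L)), ZMod.natCast_eq_natCast_iff] at hzval
  exact hzval

theorem arithmetic_progression_pairs (p q : ℕ) (hp : p.Prime) (hq : q.Prime) (hlt : q < p)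
    (mpq : ℕ) (hmpq_pos : 0 < mpq)
    (hmpq : ¬ q ^ (p - 1) ≡ 1 [MOD p ^ (mpq + 1)])
    (hmpq_min : ∀ m' : ℕ, 0 < m' → ¬ q ^ (p - 1) ≡ 1 [MOD p ^ (m' + 1)] → mpq ≤ m')
    (C : ℕ)
    (hC : ∃ M₀ : ℕ, ∀ m : ℕ, M₀ ≤ m →
      orderOf ((q : ZMod (p ^ m)) ^ (p - 1)) = p ^ (m - 1 - C)) :
    ∀ m₁ : ℕ, mpq < m₁ * (q - 1) →
      ∀ k : ℕ, 1 ≤ k → k ≤ p ^ (m₁ * (q - 1)) → k ≡ 1 [MOD p ^ (C + 1)] →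
        ∀ N : ℕ, ∃ m₂ j : ℕ, N ≤ m₂ ∧ 0 < m₂ ∧ 1 ≤ j ∧ j ≤ q ^ (m₂ * (p - 1)) ∧
          (j : ZMod q) = -1 ∧
          (k : ℤ) * (q : ℤ) ^ (m₂ * (p - 1)) - (j : ℤ) * (p : ℤ) ^ (m₁ * (q - 1)) = 1 := by
  intro m₁ hm₁ k hk1 hk2 hkC N
  have hq2 : 2 ≤ q := hq.two_le
  have hp3 : 3 ≤ p := by omega
  have hodd : Odd p := hp.odd_of_ne_two (by omega)
  have hne : p ≠ q := by omega
  have hpq : ¬ p ∣ q := fun h => hne ((Nat.prime_dvd_prime_iff_eq hp hq).mp h)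
  have hqp : ¬ q ∣ p := fun h => hne ((Nat.prime_dvd_prime_iff_eq hq hp).mp h).symm
  have hq0 : q ≠ 0 := by omega
  have ha1 : 1 ≤ q ^ (p - 1) := Nat.one_le_iff_ne_zero.mpr (pow_ne_zero _ hq0)
  haveI : Fact p.Prime := ⟨hp⟩
  haveI : Fact q.Prime := ⟨hq⟩
  -- h1 : p ^ mpq ∣ q ^ (p-1) - 1
  have hferm : p ∣ q ^ (p - 1) - 1 := by
    have hz : (q : ZMod p) ≠ 0 := by
      rw [Ne, ZMod.natCast_eq_zero_iff]; exact hpq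
    have h := ZMod.pow_card_sub_one_eq_one hz
    have h2 : ((q ^ (p - 1) : ℕ) : ZMod p) = ((1 : ℕ) : ZMod p) := by push_cast; exact h
    have h3 : q ^ (p - 1) ≡ 1 [MOD p] := (ZMod.natCast_eq_natCast_iff _ _ _).mp h2
    simpa using (aux_mod_iff ha1).mp h3
  have h2 : ¬ p ^ (mpq + 1) ∣ q ^ (p - 1) - 1 := fun h => hmpq ((aux_mod_iff ha1).mpr h)
  have h1 : p ^ mpq ∣ q ^ (p - 1) - 1 := by
    rcases Nat.eq_or_lt_of_le hmpq_pos with h | h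
    · simpa [← h] using hferm
    · by_contra hcon
      have hmin := hmpq_min (mpq - 1) (by omega) (by
        intro hmod
        have hd := (aux_mod_iff ha1).mp hmod
        rw [show mpq - 1 + 1 = mpq by omega] at hd
        exact hcon hd)
      omega
  -- identify C + 1 = mpq
  obtain ⟨M₀, hM₀⟩ := hC
  have hCm : mpq = C + 1 := by
    set m := max M₀ (mpq + C + 2) with hm
    have hA := hM₀ m (le_max_left _ _)
    have hB := aux_order p q mpq m hp hodd hpq h1 h2 hmpq_pos
      (le_trans (by omega) (le_max_right M₀ (mpq + C + 2)))
    have hE := Nat.pow_right_injective hp.two_le (hB.symm.trans hA)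
    have hm2 : mpq + C + 2 ≤ m := le_max_right _ _
    omega
  set L := m₁ * (q - 1) with hL_def
  have hLm : mpq ≤ L := hm₁.le
  have hkmod : k ≡ 1 [MOD p ^ mpq] := by rw [hCm]; exact hkC
  obtain ⟨t, ht⟩ := aux_exists p q mpq L hp hodd hpq h1 h2 hmpq_pos hLm k hkmod
  set s := N + p ^ L + 1 with hs_def
  set m₂ := t + s * p ^ (L - mpq) with hm₂_def
  have hordpos : 0 < p ^ (L - mpq) := Nat.pow_pos hp.pos
  have hsle : s ≤ s * p ^ (L - mpq) := Nat.le_mul_of_pos_right s hordpos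
  have hm₂N : N ≤ m₂ := by omega
  have hm₂big : p ^ L + 1 ≤ m₂ := by omega
  have hM2 : 0 < m₂ := by omega
  have hmod : k * q ^ (m₂ * (p - 1)) ≡ 1 [MOD p ^ L] := by
    have h := ht s
    rw [← pow_mul, mul_comm (p - 1)] at h
    exact h
  have hqM : p ^ L < q ^ (m₂ * (p - 1)) := by
    have hmle : m₂ ≤ m₂ * (p - 1) := Nat.le_mul_of_pos_right m₂ (by omega)
    calc p ^ L < 2 ^ (p ^ L) := Nat.lt_two_pow_self
      _ ≤ 2 ^ (m₂ * (p - 1)) := Nat.pow_le_pow_right (by norm_num) (by omega)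
      _ ≤ q ^ (m₂ * (p - 1)) := Nat.pow_le_pow_left hq2 _
  have hkq1 : 1 ≤ k * q ^ (m₂ * (p - 1)) :=
    Nat.one_le_iff_ne_zero.mpr (Nat.mul_ne_zero (by omega) (pow_ne_zero _ hq0))
  have hdvd : p ^ L ∣ k * q ^ (m₂ * (p - 1)) - 1 := (aux_mod_iff hkq1).mp hmod
  obtain ⟨j, hj⟩ := hdvd
  have hppos : 0 < p ^ L := Nat.pow_pos hp.pos
  have hqMk : q ^ (m₂ * (p - 1)) ≤ k * q ^ (m₂ * (p - 1)) := Nat.le_mul_of_pos_left _ hk1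
  have hjpos : 1 ≤ j := by
    rcases Nat.eq_zero_or_pos j with rfl | h
    · rw [mul_zero] at hj; omega
    · exact h
  have hjle : j ≤ q ^ (m₂ * (p - 1)) := by
    have h1' : p ^ L * j < p ^ L * q ^ (m₂ * (p - 1)) := by
      calc p ^ L * j = k * q ^ (m₂ * (p - 1)) - 1 := hj.symm
        _ < k * q ^ (m₂ * (p - 1)) := by omega
        _ ≤ p ^ L * q ^ (m₂ * (p - 1)) := Nat.mul_le_mul_right _ hk2
    exact (Nat.lt_of_mul_lt_mul_left h1').le
  have hZ : (k : ℤ) * (q : ℤ) ^ (m₂ * (p - 1)) - (j : ℤ) * (p : ℤ) ^ L = 1 := by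
    have hcast := congrArg (Nat.cast : ℕ → ℤ) hj
    push_cast [Nat.cast_sub hkq1] at hcast
    linarith
  have hzq : (j : ZMod q) = -1 := by
    have hcast := congrArg (Int.cast : ℤ → ZMod q) hZ
    push_cast at hcast
    rw [ZMod.natCast_self, zero_pow (Nat.mul_ne_zero (by omega) (by omega) : m₂ * (p - 1) ≠ 0), mul_zero] at hcast
    have hpL : ((p : ZMod q)) ^ L = 1 := by
      rw [hL_def, pow_mul]
      exact ZMod.pow_card_sub_one_eq_one (pow_ne_zero _ (by
        rw [Ne, ZMod.natCast_eq_zero_iff]; exact hqp))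
    rw [hpL, mul_one] at hcast
    linear_combination -hcast
  exact ⟨m₂, j, hm₂N, hM2, hjpos, hjle, hzq, hZ⟩
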